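/- (PI control of a port-Hamiltonian system: closed-loop dissipation.) Consider the port-Hamiltonian system ẋ = (𝒥 − ℛ)∇H(x) + Gu + d, y = Gᵀ∇H(x) (H : ℝⁿ → ℝ differentiable, 𝒥 = −𝒥ᵀ, ℛ = ℛᵀ positive semidefinite, G ∈ ℝ^{n×m}, d ∈ ℝⁿ constant) interconnected with the PI controller ζ̇ = e, y_c = K_P e + K_I ζ, where K_P, K_I ∈ ℝ^{m×m} are symmetric positive definite, through e = y − ȳ and u = −y_c. Let (x̄, ū, ζ̄) be a closed-loop equilibrium: (𝒥 − ℛ)∇H(x̄) + Gū + d = 0, ȳ = Gᵀ∇H(x̄), and ū = −K_I ζ̄. Then for all x ∈ ℝⁿ and ζ ∈ ℝᵐ, setting y = Gᵀ∇H(x), e = y − ȳ, u = −K_P e − K_I ζ: ⟨∇H(x) − ∇H(x̄), (𝒥 − ℛ)∇H(x) + Gu + d⟩ + ⟨K_I(ζ − ζ̄), e⟩ ≤ −(y − ȳ)ᵀK_P(y − ȳ). -/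

import Mathlib

open Matrix

/-- **PI control of a port-Hamiltonian system: closed-loop dissipation.** For the
port-Hamiltonian plant `ẋ = (𝒥 − ℛ)∇H(x) + Gu + d`, `y = Gᵀ∇H(x)` in feedback with the
PI controller `ζ̇ = e`, `y_c = K_P e + K_I ζ`, `e = y − ȳ`, `u = −y_c`, the sum of the
time derivatives of the Bregman plant storage and of the controller storage
`½(ζ−ζ̄)ᵀK_I(ζ−ζ̄)` is bounded by `−(y−ȳ)ᵀK_P(y−ȳ)`. -/
theorem port_hamiltonian_pi_dissipation {n m : ℕ}
    (H : (Fin n → ℝ) → ℝ) (gradH : (Fin n → ℝ) → (Fin n → ℝ))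
    (hdiff : Differentiable ℝ H)
    (hgrad : ∀ x v, (fderiv ℝ H x) v = gradH x ⬝ᵥ v)
    (Jc Rc : Matrix (Fin n) (Fin n) ℝ)
    (hJ : Jcᵀ = -Jc) (hR : Rc.PosSemidef)
    (G : Matrix (Fin n) (Fin m) ℝ) (d : Fin n → ℝ)
    (KP KI : Matrix (Fin m) (Fin m) ℝ) (hKP : KP.PosDef) (hKI : KI.PosDef)
    (xbar : Fin n → ℝ) (ubar zbar : Fin m → ℝ)
    (heq : (Jc - Rc).mulVec (gradH xbar) + G.mulVec ubar + d = 0)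
    (hub : ubar = -(KI.mulVec zbar)) :
    ∀ (x : Fin n → ℝ) (z : Fin m → ℝ),
      let ybar := Gᵀ.mulVec (gradH xbar)
      let y := Gᵀ.mulVec (gradH x)
      let e := y - ybar
      let u := -(KP.mulVec e + KI.mulVec z)
      (gradH x - gradH xbar) ⬝ᵥ ((Jc - Rc).mulVec (gradH x) + G.mulVec u + d)
        + (KI.mulVec (z - zbar)) ⬝ᵥ e
      ≤ -((y - ybar) ⬝ᵥ KP.mulVec (y - ybar)) := by
  intro x z ybar y e u
  have hd : d = -((Jc - Rc).mulVec (gradH xbar) + G.mulVec ubar) := by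
    have := heq; linear_combination (norm := module) this
  set Δ := gradH x - gradH xbar with hΔ
  -- rewrite dynamics
  have hdyn : (Jc - Rc).mulVec (gradH x) + G.mulVec u + d
      = (Jc - Rc).mulVec Δ + G.mulVec (u - ubar) := by
    rw [hd, hΔ, mulVec_sub, mulVec_sub]
    abel
  -- skew term
  have hskew : Δ ⬝ᵥ Jc.mulVec Δ = 0 := by
    have h1 : Δ ⬝ᵥ Jc.mulVec Δ = -(Δ ⬝ᵥ Jc.mulVec Δ) := by
      calc Δ ⬝ᵥ Jc.mulVec Δ = Jc.vecMul Δ ⬝ᵥ Δ := Matrix.dotProduct_mulVec _ _ _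
        _ = Jcᵀ.mulVec Δ ⬝ᵥ Δ := by rw [Matrix.mulVec_transpose]
        _ = (-Jc).mulVec Δ ⬝ᵥ Δ := by rw [hJ]
        _ = -(Jc.mulVec Δ ⬝ᵥ Δ) := by rw [Matrix.neg_mulVec, neg_dotProduct]
        _ = -(Δ ⬝ᵥ Jc.mulVec Δ) := by rw [dotProduct_comm]
    linarith
  have hRnn : 0 ≤ Δ ⬝ᵥ Rc.mulVec Δ := by
    have := hR.dotProduct_mulVec_nonneg Δ
    simpa using this
  -- e identity
  have he : e = Gᵀ.mulVec Δ := by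
    show y - ybar = _
    rw [hΔ, mulVec_sub]
  have hGdot : ∀ w : Fin m → ℝ, Δ ⬝ᵥ G.mulVec w = e ⬝ᵥ w := by
    intro w
    rw [Matrix.dotProduct_mulVec, he, Matrix.mulVec_transpose]
  have huu : u - ubar = -(KP.mulVec e) - KI.mulVec (z - zbar) := by
    show -(KP.mulVec e + KI.mulVec z) - ubar = _
    rw [hub]
    simp only [Matrix.mulVec_sub]
    module
  have hkey : (gradH x - gradH xbar) ⬝ᵥ ((Jc - Rc).mulVec (gradH x) + G.mulVec u + d)
        + (KI.mulVec (z - zbar)) ⬝ᵥ e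
      = -(Δ ⬝ᵥ Rc.mulVec Δ) - e ⬝ᵥ KP.mulVec e := by
    rw [hdyn, ← hΔ, dotProduct_add, hGdot, huu, Matrix.sub_mulVec]
    rw [dotProduct_sub, dotProduct_sub, dotProduct_neg]
    linear_combination hskew + dotProduct_comm (KI.mulVec (z - zbar)) e
  rw [hkey]
  have : e = y - ybar := rfl
  rw [← this]
  linarith
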